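/- Let V : ∂M → M̄ be an asynchronous stopping time, and define V₀(ξ) = 0 and, inductively, V_{n+1}(ξ) = Vₙ(ξ)·V(ξ − Vₙ(ξ)) if Vₙ(ξ) ∈ M, and V_{n+1}(ξ) = ξ if Vₙ(ξ) ∈ ∂M. Then every Vₙ is an asynchronous stopping time. -/

import Mathlib

open MeasureTheory Filter
open scoped ENNReal NNReal

namespace HeapPaper

variable {S : Type}

/-- Commutation pairs of words, generating the trace congruence. -/
def CommRel (I : S → S → Prop) (w₁ w₂ : FreeMonoid S) : Prop :=
  ∃ a b : S, I a b ∧ w₁ = FreeMonoid.of a * FreeMonoid.of b ∧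
    w₂ = FreeMonoid.of b * FreeMonoid.of a

/-- The congruence on the free monoid generated by the commutation of independent pieces. -/
def HeapCon (I : S → S → Prop) : Con (FreeMonoid S) := conGen (CommRel I)

/-- The heap monoid `M(Σ, I)`:  the presented monoid `⟨Σ | ab = ba, (a,b) ∈ I⟩`. -/
def Heap (I : S → S → Prop) := (HeapCon I).Quotient

instance (I : S → S → Prop) : Monoid (Heap I) :=
  inferInstanceAs (Monoid (HeapCon I).Quotient)

/-- The unique additive extension to heaps of a function `φ` defined on pieces. -/
def addExt {A : Type} [AddCommMonoid A] {I : S → S → Prop} (φ : S → A) : Heap I → A :=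
  fun x => Multiplicative.toAdd <|
    (Con.lift (HeapCon I) (FreeMonoid.lift fun a => Multiplicative.ofAdd (φ a))
      (Con.conGen_le.mpr (by
        rintro w₁ w₂ ⟨a, b, hab, rfl, rfl⟩
        exact (Con.ker_rel _).mpr (by simp [map_mul, mul_comm])))) x

/-- The length `|x|` of a heap: the common length of its representative words. -/
def len {I : S → S → Prop} (x : Heap I) : ℕ := addExt (fun _ => 1) x

/-- The number `|x|ₐ` of occurrences of the piece `a` in the heap `x`. -/
def occ {I : S → S → Prop} [DecidableEq S] (a : S) (x : Heap I) : ℕ :=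
  addExt (fun b => if b = a then 1 else 0) x

/-- The additive extension `⟨φ, x⟩` of a real-valued cost function. -/
def pairing {I : S → S → Prop} (φ : S → ℝ) (x : Heap I) : ℝ := addExt φ x

/-- The left-divisibility order on the heap monoid. -/
def hLe {I : S → S → Prop} (x y : Heap I) : Prop := ∃ z : Heap I, y = x * z

/-- Cliques: finite sets of pairwise independent pieces. -/
def Cl (I : S → S → Prop) := {s : Finset S // ∀ a ∈ s, ∀ b ∈ s, a ≠ b → I a b}

/-- The empty clique. -/
def emptyCl (I : S → S → Prop) : Cl I := ⟨∅, by simp⟩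

/-- The heap associated with a clique (product of its pieces, in any order). -/
def Cl.heap {I : S → S → Prop} (γ : Cl I) : Heap I :=
  γ.1.noncommProd (fun a => (HeapCon I).mk' (FreeMonoid.of a)) (by
    intro a ha b hb hab
    have hI : I a b := γ.2 a ha b hb hab
    show (HeapCon I).mk' (FreeMonoid.of a) * (HeapCon I).mk' (FreeMonoid.of b)
        = (HeapCon I).mk' (FreeMonoid.of b) * (HeapCon I).mk' (FreeMonoid.of a)
    rw [← map_mul, ← map_mul]
    exact (Con.eq _).mpr (ConGen.Rel.of _ _ ⟨a, b, hI, rfl, rfl⟩))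

/-- The Cartier–Foata move relation `γ → γ'` between cliques. -/
def Move {I : S → S → Prop} (γ γ' : Cl I) : Prop :=
  ∀ b ∈ γ'.1, ∃ a ∈ γ.1, ¬ I a b

/-- The boundary `∂M`: infinite admissible sequences of nonempty cliques. -/
def Bnd (I : S → S → Prop) :=
  {ξ : ℕ → Cl I // (∀ n, (ξ n).1.Nonempty) ∧ ∀ n, Move (ξ n) (ξ (n + 1))}

/-- `M̄ = M ∪ ∂M`. -/
def MB (I : S → S → Prop) := Heap I ⊕ Bnd I

/-- Partial products of a sequence of cliques. -/
def ppSeq {I : S → S → Prop} (c : ℕ → Cl I) (n : ℕ) : Heap I :=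
  ((List.range n).map fun i => (c i).heap).prod

/-- `c` is the Cartier–Foata decomposition of the heap `x`, padded with empty cliques:
`c` is admissible, eventually empty, with partial products eventually equal to `x`. -/
def CFprop (I : S → S → Prop) (c : ℕ → Cl I) (x : Heap I) : Prop :=
  (∀ n, Move (c n) (c (n + 1))) ∧
    ∃ N, ∀ n, N ≤ n → ppSeq c n = x ∧ c n = emptyCl I

/-- The (padded) Cartier–Foata decomposition of a heap. -/
noncomputable def cf (I : S → S → Prop) (x : Heap I) : ℕ → Cl I :=
  letI := Classical.propDecidable (∃ c, CFprop I c x)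
  if h : ∃ c, CFprop I c x then h.choose else fun _ => emptyCl I

/-- The Cartier–Foata sequence of an element of `M̄`. -/
noncomputable def seqOf {I : S → S → Prop} : MB I → ℕ → Cl I
  | .inl x => cf I x
  | .inr ξ => ξ.1

/-- Partial products of the Cartier–Foata sequence of an element of `M̄`. -/
noncomputable def pp {I : S → S → Prop} (ζ : MB I) (n : ℕ) : Heap I :=
  ppSeq (seqOf ζ) n

/-- The order on `M̄`: `ξ ≤ ξ'` iff `γ₁⋯γₙ ≤ γ'₁⋯γ'ₙ` in `M` for all `n`. -/
noncomputable def mLe {I : S → S → Prop} (ζ ζ' : MB I) : Prop :=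
  ∀ n : ℕ, hLe (pp ζ n) (pp ζ' n)

/-- The elementary cylinder `↑x ⊆ ∂M` of base `x ∈ M`. -/
noncomputable def cyl {I : S → S → Prop} (x : Heap I) : Set (Bnd I) :=
  {ξ : Bnd I | mLe (.inl x) (.inr ξ)}

/-- The σ-algebra `𝔉` on `∂M` generated by the elementary cylinders. -/
noncomputable def Fsa (I : S → S → Prop) : MeasurableSpace (Bnd I) :=
  MeasurableSpace.generateFrom {A : Set (Bnd I) | ∃ x : Heap I, A = cyl x}

noncomputable instance (I : S → S → Prop) : MeasurableSpace (Bnd I) := Fsa I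

/-- `ζ` is the least upper bound in `M̄` of the nondecreasing sequence `(x·γ₁⋯γₙ)ₙ`,
where `(γₙ)` is the Cartier–Foata sequence of `ξ`; this characterizes `x·ξ`. -/
noncomputable def IsConc {I : S → S → Prop} (x : Heap I) (ξ : Bnd I) (ζ : MB I) : Prop :=
  (∀ n : ℕ, mLe (.inl (x * pp (.inr ξ) n)) ζ) ∧
    ∀ η : MB I, (∀ n : ℕ, mLe (.inl (x * pp (.inr ξ) n)) η) → mLe ζ η

/-- The concatenation `x·ξ ∈ ∂M` of a heap `x` and an infinite heap `ξ`. -/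
noncomputable def concB {I : S → S → Prop} (x : Heap I) (ξ : Bnd I) : Bnd I :=
  letI := Classical.propDecidable (∃ ζ : Bnd I, IsConc x ξ (.inr ζ))
  if h : ∃ ζ : Bnd I, IsConc x ξ (.inr ζ) then h.choose else ξ

/-- The difference `ξ − x`: the unique `ζ ∈ ∂M` with `x·ζ = ξ` (junk value if none exists). -/
noncomputable def subB {I : S → S → Prop} (ξ : Bnd I) (x : Heap I) : Bnd I :=
  letI := Classical.propDecidable (∃ ζ : Bnd I, concB x ζ = ξ)
  if h : ∃ ζ : Bnd I, concB x ζ = ξ then h.choose else ξ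

/-- Asynchronous stopping time. -/
noncomputable def IsAST {I : S → S → Prop} (V : Bnd I → MB I) : Prop :=
  (∀ ξ : Bnd I, mLe (V ξ) (.inr ξ)) ∧
    ∀ (ξ ξ' : Bnd I) (x : Heap I), V ξ = .inl x → mLe (.inl x) (.inr ξ') → V ξ' = V ξ

/-- The shift operator `θ_V` associated with an AST `V` (junk: identity outside its domain). -/
noncomputable def shiftV {I : S → S → Prop} (V : Bnd I → MB I) (ξ : Bnd I) : Bnd I :=
  match V ξ with
  | .inl x => subB ξ x
  | .inr _ => ξ

/-- The σ-algebra `𝔉_V` generated by the cylinders of the finite values of `V`. -/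
noncomputable def astSA {I : S → S → Prop} (V : Bnd I → MB I) : MeasurableSpace (Bnd I) :=
  MeasurableSpace.generateFrom
    {A : Set (Bnd I) | ∃ x : Heap I, (∃ ξ : Bnd I, V ξ = .inl x) ∧ A = cyl x}

/-- The iterated sequence `(Vₙ)ₙ` of an AST `V`:  `V₀ = 0` and
`V_{n+1}(ξ) = Vₙ(ξ)·V(ξ − Vₙ(ξ))` if `Vₙ(ξ) ∈ M`, `V_{n+1}(ξ) = ξ` otherwise. -/
noncomputable def iter {I : S → S → Prop} (V : Bnd I → MB I) : ℕ → Bnd I → MB I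
  | 0, _ => .inl 1
  | n + 1, ξ =>
    match iter V n ξ with
    | .inl x =>
      match V (subB ξ x) with
      | .inl y => .inl (x * y)
      | .inr ζ => .inr (concB x ζ)
    | .inr _ => .inr ξ

/-- The increment `Δ_{n+1} = V ∘ θ_{Vₙ}` (junk value outside the domain of `θ_{Vₙ}`). -/
noncomputable def Delta {I : S → S → Prop} (V : Bnd I → MB I) (n : ℕ) (ξ : Bnd I) : MB I :=
  match iter V n ξ with
  | .inl x => V (subB ξ x)
  | .inr _ => .inr ξ

/-- The length of an element of `M̄`, with `|ξ| = ∞` for `ξ ∈ ∂M`. -/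
noncomputable def lenE {I : S → S → Prop} : MB I → ℝ≥0∞
  | .inl x => (len x : ℝ≥0∞)
  | .inr _ => ⊤

/-- `E|V| < ∞`. -/
noncomputable def EVfin {I : S → S → Prop} (P : Measure (Bnd I)) (V : Bnd I → MB I) : Prop :=
  ∫⁻ ξ, lenE (V ξ) ∂P < ⊤

/-- The AST `V` is exhaustive: it is `ℙ`-a.s. finite and `ℙ`-a.s. `ξ = ⋁ₙ Vₙ(ξ)`
(`ξ` is the least upper bound of its iterates). -/
noncomputable def Exhaustive {I : S → S → Prop} (P : Measure (Bnd I)) (V : Bnd I → MB I) : Prop :=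
  (∀ᵐ ξ ∂P, ∃ x : Heap I, V ξ = .inl x) ∧
    ∀ᵐ ξ ∂P, (∀ n : ℕ, mLe (iter V n ξ) (.inr ξ)) ∧
      ∀ ζ : MB I, (∀ n : ℕ, mLe (iter V n ξ) ζ) → mLe (.inr ξ) ζ

/-- `ℙ` is a Bernoulli measure: a probability measure on `(∂M, 𝔉)` that is multiplicative
and positive on elementary cylinders. -/
noncomputable def IsBernoulli {I : S → S → Prop} (P : Measure (Bnd I)) : Prop :=
  IsProbabilityMeasure P ∧
    (∀ x y : Heap I, P (cyl (x * y)) = P (cyl x) * P (cyl y)) ∧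
    ∀ x : Heap I, 0 < P (cyl x)

/-- `ζ` is the greatest lower bound, within the complete lattice `L(ξ)`, of the set
`Hₐ(ξ)` of finite subheaps of `ξ` containing an occurrence of `a`:  this characterizes
the first hitting time of `a`. -/
noncomputable def IsHit {I : S → S → Prop} [DecidableEq S] (a : S) (ξ : Bnd I) (ζ : MB I) :
    Prop :=
  mLe ζ (.inr ξ) ∧
    (∀ x : Heap I, mLe (.inl x) (.inr ξ) → 0 < occ a x → mLe ζ (.inl x)) ∧
    ∀ η : MB I, mLe η (.inr ξ) →
      (∀ x : Heap I, mLe (.inl x) (.inr ξ) → 0 < occ a x → mLe η (.inl x)) → mLe η ζ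

/-- The first hitting time of the piece `a`. -/
noncomputable def hit {I : S → S → Prop} [DecidableEq S] (a : S) (ξ : Bnd I) : MB I :=
  letI := Classical.propDecidable (∃ ζ : MB I, IsHit a ξ ζ)
  if h : ∃ ζ : MB I, IsHit a ξ ζ then h.choose else .inr ξ

/-- A maximal clique: a maximal element of `(𝒞, ≤)`. -/
noncomputable def IsMaxCl {I : S → S → Prop} (γ : Cl I) : Prop :=
  ∀ δ : Cl I, hLe γ.heap δ.heap → δ.heap = γ.heap

/-- The AST cutting an infinite heap at the first occurrence of a maximal clique. -/
noncomputable def Vmax {I : S → S → Prop} (ξ : Bnd I) : MB I :=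
  letI := Classical.propDecidable
  if h : ∃ k : ℕ, IsMaxCl (ξ.1 k) then .inl (ppSeq ξ.1 (Nat.find h + 1)) else .inr ξ

/-- The ergodic mean `⟨φ, x⟩ / |x|` (junk value `0` on infinite heaps). -/
noncomputable def ratioC {I : S → S → Prop} (φ : S → ℝ) : MB I → ℝ
  | .inl x => pairing φ x / (len x : ℝ)
  | .inr _ => 0

/-- The ratio `φ(x)/|x|` for `φ` defined on heaps (junk value `0` on infinite heaps). -/
noncomputable def ratioH {I : S → S → Prop} (φ : Heap I → ℝ) : MB I → ℝ
  | .inl x => φ x / (len x : ℝ)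
  | .inr _ => 0

/-- The set `ℭ` of nonempty cliques. -/
def NCl (I : S → S → Prop) := {γ : Cl I // γ.1.Nonempty}

instance [Fintype S] (I : S → S → Prop) : Finite (Cl I) :=
  inferInstanceAs (Finite {s : Finset S // ∀ a ∈ s, ∀ b ∈ s, a ≠ b → I a b})

instance [Fintype S] (I : S → S → Prop) : Finite (NCl I) :=
  inferInstanceAs (Finite {γ : Cl I // γ.1.Nonempty})

/-- The valuation `f(x) = ℙ(↑x)` associated with `ℙ`. -/
noncomputable def fval {I : S → S → Prop} (P : Measure (Bnd I)) (x : Heap I) : ℝ :=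
  (P (cyl x)).toReal

open Classical in
/-- The Möbius transform `h` of the valuation `f` associated with `ℙ`. -/
noncomputable def mobius {I : S → S → Prop} (P : Measure (Bnd I)) (γ : Cl I) : ℝ :=
  ∑ᶠ γ' : Cl I,
    if hLe γ.heap γ'.heap then (-1 : ℝ) ^ (γ'.1.card - γ.1.card) * fval P γ'.heap else 0

open Classical in
/-- The normalization `g(γ) = Σ_{γ'∈ℭ, γ→γ'} h(γ')`. -/
noncomputable def gnorm {I : S → S → Prop} (P : Measure (Bnd I)) (γ : Cl I) : ℝ :=
  ∑ᶠ γ' : Cl I, if γ'.1.Nonempty ∧ Move γ γ' then mobius P γ' else 0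

open Classical in
/-- The transition matrix of the Markov chain of cliques. -/
noncomputable def Pmat {I : S → S → Prop} (P : Measure (Bnd I)) (γ γ' : Cl I) : ℝ :=
  if Move γ γ' then mobius P γ' / gnorm P γ else 0

/-- `π` is a stationary probability distribution, carried by the nonempty cliques, of the
Markov chain of cliques. -/
noncomputable def IsStationary {I : S → S → Prop} (P : Measure (Bnd I)) (π : Cl I → ℝ) :
    Prop :=
  (∀ γ : Cl I, 0 ≤ π γ) ∧ (π (emptyCl I) = 0) ∧ (∑ᶠ γ : Cl I, π γ = 1) ∧
    ∀ γ' : Cl I, π γ' = ∑ᶠ γ : Cl I, π γ * Pmat P γ γ'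

open Classical in
/-- The nonnegative matrix `B` on `ℭ×ℭ`: `B_{γ,γ'} = f(γ')` if `γ → γ'`, else `0`. -/
noncomputable def Bmat {I : S → S → Prop} (P : Measure (Bnd I)) :
    Matrix (NCl I) (NCl I) ℝ :=
  fun γ γ' => if Move γ.1 γ'.1 then fval P γ'.1.heap else 0

/-- The spectral radius of `B` (as a complex matrix). -/
noncomputable def specRadB [Fintype S] {I : S → S → Prop} (P : Measure (Bnd I)) : ℝ≥0∞ :=
  letI : Fintype (NCl I) := Fintype.ofFinite _
  letI : DecidableEq (NCl I) := Classical.decEq _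
  spectralRadius ℂ ((Bmat P).map (algebraMap ℝ ℂ))

/-- The height `τ(x)` of a heap: the number of cliques in its Cartier–Foata decomposition. -/
noncomputable def height {I : S → S → Prop} (x : Heap I) : ℕ :=
  sInf {N : ℕ | ∀ n, N ≤ n → cf I x n = emptyCl I}

/-- The ratio `|x|/τ(x)` (junk value `0` on infinite heaps). -/
noncomputable def speedRatio {I : S → S → Prop} : MB I → ℝ
  | .inl x => (len x : ℝ) / (height x : ℝ)
  | .inr _ => 0

/-- `ψ ∘ θ_V` extended by `0` outside the domain of `θ_V`. -/
noncomputable def extShift {I : S → S → Prop} (V : Bnd I → MB I) (ψ : Bnd I → ℝ)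
    (η : Bnd I) : ℝ :=
  match V η with
  | .inl _ => ψ (shiftV V η)
  | .inr _ => 0

section TraceAux

variable {S : Type} [DecidableEq S] {I : S → S → Prop}

/-- Projection of a word onto the letters `{a, b}`. -/
def pj (a b : S) (l : List S) : List S := l.filter (fun c => c == a || c == b)

lemma pj_append (a b : S) (l m : List S) :
    pj a b (l ++ m) = pj a b l ++ pj a b m := by simp [pj, List.filter_append]

lemma pj_cons (a b c : S) (l : List S) :
    pj a b (c :: l) = if c = a ∨ c = b then c :: pj a b l else pj a b l := by
  by_cases h : c = a ∨ c = b
  · have : (c == a || c == b) = true := by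
      rcases h with h | h <;> simp [h]
    simp [pj, List.filter_cons, this, h]
  · have : (c == a || c == b) = false := by
      push_neg at h
      simp [h.1, h.2]
    simp [pj, List.filter_cons, this, h]

lemma mem_of_mem_pj {a b c : S} {l : List S} (h : c ∈ pj a b l) : c ∈ l :=
  List.mem_of_mem_filter h

lemma eq_of_mem_pj {a b c : S} {l : List S} (h : c ∈ pj a b l) : c = a ∨ c = b := by
  have := List.of_mem_filter h
  simpa using this

lemma self_mem_pj {a b : S} {l : List S} (h : a ∈ l) : a ∈ pj a b l := by
  apply List.mem_filter_of_mem h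
  simp

/-- The projection-equality relation, as a congruence. -/
def projCon (I : S → S → Prop) [DecidableEq S] : Con (FreeMonoid S) where
  r := fun w₁ w₂ => ∀ a b : S, ¬ I a b → pj a b (FreeMonoid.toList w₁) = pj a b (FreeMonoid.toList w₂)
  iseqv := by
    constructor
    · intro x a b _; rfl
    · intro x y h a b hab; exact (h a b hab).symm
    · intro x y z h h' a b hab; exact (h a b hab).trans (h' a b hab)
  mul' := by
    intro w x y z h h' a b hab
    show pj a b (FreeMonoid.toList w ++ FreeMonoid.toList y)
        = pj a b (FreeMonoid.toList x ++ FreeMonoid.toList z)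
    rw [pj_append, pj_append, h a b hab, h' a b hab]

lemma heapCon_le_projCon (hsymm : ∀ a b : S, I a b → I b a) (hirr : ∀ a : S, ¬ I a a) :
    HeapCon I ≤ projCon I := by
  apply Con.conGen_le.mpr
  rintro w₁ w₂ ⟨a, b, hab, rfl, rfl⟩
  intro c d hcd
  have hne : a ≠ b := by rintro rfl; exact hirr a hab
  show pj c d [a, b] = pj c d [b, a]
  by_cases ha : a = c ∨ a = d <;> by_cases hb : b = c ∨ b = d
  · exfalso
    rcases ha with rfl | rfl <;> rcases hb with rfl | rfl
    · exact hne rfl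
    · exact hcd hab
    · exact hcd (hsymm _ _ hab)
    · exact hne rfl
  · simp [pj_cons, ha, hb]
  · simp [pj_cons, ha, hb]
  · simp [pj_cons, ha, hb]

lemma pj_eq_of_heapCon (hsymm : ∀ a b : S, I a b → I b a) (hirr : ∀ a : S, ¬ I a a)
    {w₁ w₂ : FreeMonoid S} (h : HeapCon I w₁ w₂) (a b : S) (hab : ¬ I a b) :
    pj a b (FreeMonoid.toList w₁) = pj a b (FreeMonoid.toList w₂) :=
  heapCon_le_projCon hsymm hirr h a b hab

lemma exists_first_split {a : S} {l : List S} (h : a ∈ l) :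
    ∃ p q : List S, l = p ++ a :: q ∧ a ∉ p := by
  induction l with
  | nil => simp at h
  | cons c t ih =>
    by_cases hca : c = a
    · subst hca; exact ⟨[], t, rfl, by simp⟩
    · have hat : a ∈ t := by
        rcases List.mem_cons.1 h with h | h
        · exact absurd h.symm hca
        · exact h
      obtain ⟨p, q, rfl, hp⟩ := ih hat
      refine ⟨c :: p, q, rfl, ?_⟩
      intro hm
      rcases List.mem_cons.1 hm with h | h
      · exact hca h.symm
      · exact hp h

/-- Bubble an independent letter to the front. -/
lemma heapCon_bubble (a : S) (p q : List S) (hp : ∀ c ∈ p, I c a) :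
    HeapCon I (FreeMonoid.ofList (p ++ a :: q)) (FreeMonoid.ofList (a :: (p ++ q))) := by
  induction p with
  | nil => exact (HeapCon I).refl _
  | cons c t ih =>
    have h1 : HeapCon I (FreeMonoid.ofList (t ++ a :: q)) (FreeMonoid.ofList (a :: (t ++ q))) :=
      ih (fun x hx => hp x (List.mem_cons_of_mem _ hx))
    have h2 : HeapCon I (FreeMonoid.ofList (c :: (t ++ a :: q)))
        (FreeMonoid.ofList (c :: a :: (t ++ q))) := by
      have : HeapCon I (FreeMonoid.of c) (FreeMonoid.of c) := (HeapCon I).refl _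
      exact (HeapCon I).mul this h1
    have h3 : HeapCon I (FreeMonoid.ofList (c :: a :: (t ++ q)))
        (FreeMonoid.ofList (a :: c :: (t ++ q))) := by
      have hswap : HeapCon I (FreeMonoid.of c * FreeMonoid.of a)
          (FreeMonoid.of a * FreeMonoid.of c) :=
        ConGen.Rel.of _ _ ⟨c, a, hp c (List.mem_cons_self), rfl, rfl⟩
      exact (HeapCon I).mul hswap ((HeapCon I).refl (FreeMonoid.ofList (t ++ q)))
    exact (HeapCon I).trans h2 h3

lemma projCon_le_heapCon (hsymm : ∀ a b : S, I a b → I b a) (hirr : ∀ a : S, ¬ I a a) :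
    ∀ (w₁ w₂ : List S),
      (∀ a b : S, ¬ I a b → pj a b w₁ = pj a b w₂) →
      HeapCon I (FreeMonoid.ofList w₁) (FreeMonoid.ofList w₂) := by
  intro w₁
  induction w₁ with
  | nil =>
    intro w₂ h
    cases w₂ with
    | nil => exact (HeapCon I).refl _
    | cons c t =>
      exfalso
      have := h c c (hirr c)
      rw [pj_cons] at this
      simp [pj] at this
  | cons a t ih =>
    intro w₂ h
    -- a occurs in w₂
    have haw₂ : a ∈ w₂ := by
      have := h a a (hirr a)
      rw [pj_cons] at this
      simp only [or_self, if_pos rfl] at this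
      have : a ∈ pj a a w₂ := by rw [← this]; exact List.mem_cons_self
      exact mem_of_mem_pj this
    obtain ⟨p, q, rfl, hpa⟩ := exists_first_split haw₂
    -- every letter of p is independent of a
    have hpI : ∀ c ∈ p, I c a := by
      intro c hc
      by_contra hIca
      have hca : c ≠ a := fun hh => hpa (hh ▸ hc)
      have hIac : ¬ I a c := fun hh => hIca (hsymm _ _ hh)
      have hpj := h c a (by intro hh; exact hIca hh)
      rw [pj_cons] at hpj
      simp only [or_true, if_pos] at hpj
      rw [pj_append, pj_cons] at hpj
      simp only [or_true, if_pos] at hpj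
      -- pj c a p is nonempty
      have hcp : c ∈ pj c a p := by
        apply List.mem_filter_of_mem hc; simp
      obtain ⟨h₀, rest, hrest⟩ := List.exists_cons_of_ne_nil (List.ne_nil_of_mem hcp)
      rw [hrest] at hpj
      have hh₀ : h₀ ∈ pj c a p := by rw [hrest]; exact List.mem_cons_self
      have h₀p : h₀ ∈ p := mem_of_mem_pj hh₀
      have : a = h₀ := by
        have := List.head_eq_of_cons_eq hpj
        exact this
      exact hpa (this ▸ h₀p)
    -- reduce to tails
    have hcon2 : HeapCon I (FreeMonoid.ofList (p ++ a :: q)) (FreeMonoid.ofList (a :: (p ++ q))) :=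
      heapCon_bubble a p q hpI
    have hpj2 : ∀ c d : S, ¬ I c d → pj c d (p ++ a :: q) = pj c d (a :: (p ++ q)) :=
      pj_eq_of_heapCon hsymm hirr hcon2
    have htails : ∀ c d : S, ¬ I c d → pj c d t = pj c d (p ++ q) := by
      intro c d hcd
      have h1 := h c d hcd
      have h2 := hpj2 c d hcd
      rw [h2] at h1
      rw [pj_cons, pj_cons] at h1
      by_cases hac : a = c ∨ a = d
      · rw [if_pos hac, if_pos hac] at h1
        exact List.tail_eq_of_cons_eq h1
      · rwa [if_neg hac, if_neg hac] at h1
    have hcont : HeapCon I (FreeMonoid.ofList t) (FreeMonoid.ofList (p ++ q)) := ih _ htails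
    have hcons : HeapCon I (FreeMonoid.ofList (a :: t)) (FreeMonoid.ofList (a :: (p ++ q))) :=
      (HeapCon I).mul ((HeapCon I).refl (FreeMonoid.of a)) hcont
    exact (HeapCon I).trans hcons ((HeapCon I).symm hcon2)

end TraceAux

section HeapAux

variable {S : Type} [DecidableEq S] {I : S → S → Prop}

/-- The heap of a word. -/
def hw (I : S → S → Prop) (l : List S) : Heap I := (HeapCon I).mk' (FreeMonoid.ofList l)

lemma hw_nil : hw I [] = 1 := map_one _

lemma hw_append (l m : List S) : hw I (l ++ m) = hw I l * hw I m := by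
  show (HeapCon I).mk' (FreeMonoid.ofList l * FreeMonoid.ofList m) = _
  rw [map_mul]
  rfl

lemma hw_cons (a : S) (l : List S) : hw I (a :: l) = hw I [a] * hw I l :=
  hw_append [a] l

lemma hw_surjective (x : Heap I) : ∃ l : List S, hw I l = x := by
  obtain ⟨w, rfl⟩ := Con.mk'_surjective x
  exact ⟨FreeMonoid.toList w, rfl⟩

lemma hw_eq_iff (hsymm : ∀ a b : S, I a b → I b a) (hirr : ∀ a : S, ¬ I a a)
    {l m : List S} : hw I l = hw I m ↔ ∀ a b : S, ¬ I a b → pj a b l = pj a b m := by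
  constructor
  · intro h a b hab
    exact pj_eq_of_heapCon hsymm hirr ((Con.eq _).mp h) a b hab
  · intro h
    exact (Con.eq _).mpr (projCon_le_heapCon hsymm hirr l m h)

lemma addExt_mul {A : Type} [AddCommMonoid A] (φ : S → A) (x y : Heap I) :
    addExt φ (x * y) = addExt φ x + addExt φ y := by
  unfold addExt
  exact congrArg Multiplicative.toAdd (map_mul _ x y)

lemma addExt_hw {A : Type} [AddCommMonoid A] (φ : S → A) (l : List S) :
    addExt φ (hw I l) = (l.map φ).sum := by
  induction l with
  | nil =>
    show addExt φ ((HeapCon I).mk' 1) = 0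
    unfold addExt
    rw [map_one, map_one]
    rfl
  | cons a t ih =>
    rw [hw_cons, addExt_mul, ih]
    have : addExt (I := I) φ (hw I [a]) = φ a := by
      unfold addExt hw
      erw [Con.lift_mk']
      show Multiplicative.toAdd (FreeMonoid.lift _ (FreeMonoid.of a)) = φ a
      rw [FreeMonoid.lift_eval_of]
      rfl
    rw [this]
    simp

lemma len_hw (l : List S) : len (hw I l) = l.length := by
  unfold len
  rw [addExt_hw]
  simp

lemma len_mul (x y : Heap I) : len (x * y) = len x + len y := addExt_mul _ x y

lemma len_one : len (1 : Heap I) = 0 := by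
  have := len_hw (I := I) []
  rwa [hw_nil] at this

lemma eq_one_of_len_eq_zero {x : Heap I} (h : len x = 0) : x = 1 := by
  obtain ⟨l, rfl⟩ := hw_surjective x
  rw [len_hw] at h
  rw [List.length_eq_zero_iff.mp h, hw_nil]

/-- Left cancellation in the heap monoid. -/
lemma heap_cancel_left (hsymm : ∀ a b : S, I a b → I b a) (hirr : ∀ a : S, ¬ I a a)
    {x y z : Heap I} (h : x * y = x * z) : y = z := by
  obtain ⟨l, rfl⟩ := hw_surjective x
  obtain ⟨m, rfl⟩ := hw_surjective y
  obtain ⟨n, rfl⟩ := hw_surjective z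
  rw [← hw_append, ← hw_append] at h
  rw [hw_eq_iff hsymm hirr] at h ⊢
  intro a b hab
  have := h a b hab
  rw [pj_append, pj_append] at this
  exact List.append_cancel_left this

-- basic hLe lemmas
lemma hLe_refl (x : Heap I) : hLe x x := ⟨1, (mul_one x).symm⟩

lemma hLe_trans {x y z : Heap I} (h : hLe x y) (h' : hLe y z) : hLe x z := by
  obtain ⟨u, rfl⟩ := h; obtain ⟨v, rfl⟩ := h'
  exact ⟨u * v, mul_assoc _ _ _⟩

lemma hLe_one (x : Heap I) : hLe 1 x := ⟨x, (one_mul x).symm⟩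

lemma hLe_mul_right (x y : Heap I) : hLe x (x * y) := ⟨y, rfl⟩

lemma hLe_mul_left_mono {y z : Heap I} (x : Heap I) (h : hLe y z) : hLe (x * y) (x * z) := by
  obtain ⟨u, rfl⟩ := h
  exact ⟨u, (mul_assoc _ _ _).symm⟩

lemma hLe_len {x y : Heap I} (h : hLe x y) : len x ≤ len y := by
  obtain ⟨u, rfl⟩ := h
  rw [len_mul]
  exact Nat.le_add_right _ _

lemma hLe_antisymm {x y : Heap I} (h : hLe x y) (h' : hLe y x) : x = y := by
  obtain ⟨u, rfl⟩ := h
  have := hLe_len h'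
  rw [len_mul] at this
  have hu : len u = 0 := by omega
  rw [eq_one_of_len_eq_zero hu, mul_one]

lemma eq_of_hLe_len {x y : Heap I} (h : hLe x y) (hl : len y ≤ len x) : x = y := by
  obtain ⟨u, rfl⟩ := h
  rw [len_mul] at hl
  have hu : len u = 0 := by omega
  rw [eq_one_of_len_eq_zero hu, mul_one]

lemma hLe_cancel_left (hsymm : ∀ a b : S, I a b → I b a) (hirr : ∀ a : S, ¬ I a a)
    {x y z : Heap I} (h : hLe (x * y) (x * z)) : hLe y z := by
  obtain ⟨u, hu⟩ := h
  rw [mul_assoc] at hu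
  exact ⟨u, heap_cancel_left hsymm hirr hu⟩

/-- Extraction: a letter divides a word-heap iff it occurs after an independent prefix. -/
lemma letter_le_iff (hsymm : ∀ a b : S, I a b → I b a) (hirr : ∀ a : S, ¬ I a a)
    {a : S} {l : List S} :
    hLe (hw I [a]) (hw I l) ↔ ∃ p q : List S, l = p ++ a :: q ∧ ∀ c ∈ p, I c a := by
  constructor
  · rintro ⟨z, hz⟩
    obtain ⟨v, rfl⟩ := hw_surjective z
    rw [← hw_append] at hz
    rw [hw_eq_iff hsymm hirr] at hz
    have haa := hz a a (hirr a)
    have hal : a ∈ l := by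
      have : a ∈ pj a a l := by
        rw [haa]
        show a ∈ pj a a (a :: v)
        rw [pj_cons, if_pos (Or.inl rfl)]
        exact List.mem_cons_self
      exact mem_of_mem_pj this
    obtain ⟨p, q, rfl, hpa⟩ := exists_first_split hal
    refine ⟨p, q, rfl, ?_⟩
    intro c hc
    by_contra hIca
    have hca : c ≠ a := fun hh => hpa (hh ▸ hc)
    have hpj := hz c a (fun hh => hIca hh)
    rw [List.singleton_append] at hpj
    rw [pj_append] at hpj
    simp only [pj_cons, if_pos (show a = c ∨ a = a from Or.inr rfl)] at hpj
    have hcp : c ∈ pj c a p := by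
      apply List.mem_filter_of_mem hc; simp
    obtain ⟨h₀, rest, hrest⟩ := List.exists_cons_of_ne_nil (List.ne_nil_of_mem hcp)
    rw [hrest] at hpj
    have hh₀ : h₀ ∈ pj c a p := by rw [hrest]; exact List.mem_cons_self
    have h₀p : h₀ ∈ p := mem_of_mem_pj hh₀
    have : h₀ = a := by
      have := congrArg (fun l => l.head?) hpj
      simpa using this
    exact hpa (this ▸ h₀p)
  · rintro ⟨p, q, rfl, hp⟩
    have : hw I (p ++ a :: q) = hw I (a :: (p ++ q)) :=
      (Con.eq _).mpr (heapCon_bubble a p q hp)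
    rw [this]
    rw [show hw I (a :: (p ++ q)) = hw I [a] * hw I (p ++ q) from hw_cons _ _]
    exact hLe_mul_right _ _

/-- Extraction of a letter through a heap whose letters are all independent of it. -/
lemma letter_le_cons (hsymm : ∀ a b : S, I a b → I b a) (hirr : ∀ a : S, ¬ I a a)
    {a b : S} {y : Heap I} (hab : a ≠ b) (h : hLe (hw I [a]) (hw I [b] * y)) :
    hLe (hw I [a]) y := by
  obtain ⟨v, rfl⟩ := hw_surjective y
  rw [← hw_cons] at h
  rw [letter_le_iff hsymm hirr] at h
  obtain ⟨p, q, hpq, hp⟩ := h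
  cases p with
  | nil => simp at hpq; exact absurd hpq.1.symm hab
  | cons c t =>
    rw [List.cons_append] at hpq
    have hbv : b = c ∧ v = t ++ a :: q := by
      have h1 := List.head_eq_of_cons_eq hpq
      have h2 := List.tail_eq_of_cons_eq hpq
      exact ⟨h1, h2⟩
    rw [hbv.2, letter_le_iff hsymm hirr]
    exact ⟨t, q, rfl, fun c hc => hp c (List.mem_cons_of_mem _ hc)⟩

end HeapAux

section CliqueAux

variable {S : Type} [DecidableEq S] {I : S → S → Prop}

lemma listProd_hw (l : List S) :
    (l.map (fun a => (HeapCon I).mk' (FreeMonoid.of a))).prod = hw I l := by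
  induction l with
  | nil => rw [hw_nil]; rfl
  | cons a t ih =>
    rw [List.map_cons, List.prod_cons, ih, hw_cons]
    rfl

lemma mnc_congr {M : Type} [Monoid M] {m₁ m₂ : Multiset M} (h : m₁ = m₂) (c1 c2) :
    m₁.noncommProd c1 = m₂.noncommProd c2 := by subst h; rfl

lemma fnc_congr {M : Type} [Monoid M] {s t : Finset S} (h : s = t) (f : S → M) (c1 c2) :
    s.noncommProd f c1 = t.noncommProd f c2 := by subst h; rfl

lemma noncommProd_eq_listProd {M : Type} [Monoid M] (s : Finset S) (f : S → M) (comm) :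
    s.noncommProd f comm = (s.toList.map f).prod := by
  rw [Finset.noncommProd]
  have h1 : Multiset.map f s.val = ((s.toList.map f : List M) : Multiset M) := by
    rw [← Finset.coe_toList s, Multiset.map_coe]
  rw [mnc_congr h1 _ (by rw [← h1]; exact Finset.noncommProd_lemma s f comm)]
  exact Multiset.noncommProd_coe _ _

lemma cl_heap_eq (γ : Cl I) : γ.heap = hw I γ.1.toList := by
  unfold Cl.heap
  exact (noncommProd_eq_listProd _ _ _).trans (listProd_hw _)

lemma len_cl (γ : Cl I) : len γ.heap = γ.1.card := by
  rw [cl_heap_eq, len_hw, Finset.length_toList]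

lemma emptyCl_heap : (emptyCl I).heap = 1 := by
  rw [cl_heap_eq]
  show hw I (∅ : Finset S).toList = 1
  rw [Finset.toList_empty, hw_nil]

lemma cl_heap_eq_one {γ : Cl I} (h : γ.1 = ∅) : γ.heap = 1 := by
  rw [cl_heap_eq, h, Finset.toList_empty, hw_nil]

lemma letter_le_cl (hsymm : ∀ a b : S, I a b → I b a) (hirr : ∀ a : S, ¬ I a a)
    {γ : Cl I} {a : S} (h : a ∈ γ.1) : hLe (hw I [a]) γ.heap := by
  rw [cl_heap_eq, letter_le_iff hsymm hirr]
  have : a ∈ γ.1.toList := Finset.mem_toList.mpr h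
  obtain ⟨p, q, hpq, hpa⟩ := exists_first_split this
  refine ⟨p, q, hpq, ?_⟩
  intro c hc
  have hcl : c ∈ γ.1.toList := by rw [hpq]; exact List.mem_append_left _ hc
  have hcγ : c ∈ γ.1 := Finset.mem_toList.mp hcl
  have hca : c ≠ a := fun hh => hpa (hh ▸ hc)
  exact γ.2 c hcγ a h hca

/-- Subclique. -/
def subCl (δ : Cl I) (s : Finset S) (hs : s ⊆ δ.1) : Cl I :=
  ⟨s, fun a ha b hb hne => δ.2 a (hs ha) b (hs hb) hne⟩

lemma cl_split_heap (δ : Cl I) (s : Finset S) (hs : s ⊆ δ.1) :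
    δ.heap = (subCl δ s hs).heap * (subCl δ (δ.1 \ s) Finset.sdiff_subset).heap := by
  show Finset.noncommProd _ _ _ = Finset.noncommProd _ _ _ * Finset.noncommProd _ _ _
  have hd : Disjoint (subCl δ s hs).1 (subCl δ (δ.1 \ s) Finset.sdiff_subset).1 :=
    Finset.disjoint_sdiff
  have hu : (subCl δ s hs).1 ∪ (subCl δ (δ.1 \ s) Finset.sdiff_subset).1 = δ.1 :=
    Finset.union_sdiff_of_subset hs
  have C : ((((subCl δ s hs).1 ∪ (subCl δ (δ.1 \ s) Finset.sdiff_subset).1 : Finset S)) : Set S).Pairwise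
      (Function.onFun Commute fun a => (HeapCon I).mk' (FreeMonoid.of a)) := by
    rw [hu]
    intro a ha b hb hab
    have hI : I a b := δ.2 a (Finset.mem_coe.mp ha) b (Finset.mem_coe.mp hb) hab
    show (HeapCon I).mk' (FreeMonoid.of a) * (HeapCon I).mk' (FreeMonoid.of b)
        = (HeapCon I).mk' (FreeMonoid.of b) * (HeapCon I).mk' (FreeMonoid.of a)
    rw [← map_mul, ← map_mul]
    exact (Con.eq _).mpr (ConGen.Rel.of _ _ ⟨a, b, hI, rfl, rfl⟩)
  refine (fnc_congr hu.symm _ _ C).trans ?_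
  exact Finset.noncommProd_union_of_disjoint hd _ C

lemma cl_comm_heap (γ : Cl I) {a : S} (ha : ∀ b ∈ γ.1, I b a) :
    γ.heap * hw I [a] = hw I [a] * γ.heap := by
  rw [cl_heap_eq, ← hw_append]
  have h1 : hw I (γ.1.toList ++ [a]) = hw I (a :: (γ.1.toList ++ [])) :=
    (Con.eq _).mpr (heapCon_bubble a γ.1.toList []
      (fun c hc => ha c (Finset.mem_toList.mp hc)))
  rw [h1, List.append_nil, hw_cons]

lemma list_le (hsymm : ∀ a b : S, I a b → I b a) (hirr : ∀ a : S, ¬ I a a) :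
    ∀ (l : List S) (x : Heap I), l.Nodup → (∀ a ∈ l, hLe (hw I [a]) x) → hLe (hw I l) x := by
  intro l
  induction l with
  | nil => intro x _ _; rw [hw_nil]; exact hLe_one x
  | cons a t ih =>
    intro x hnd h
    obtain ⟨x', hx'⟩ := h a (List.mem_cons_self)
    have ht : ∀ b ∈ t, hLe (hw I [b]) x' := by
      intro b hb
      have hba : a ≠ b := by
        rintro rfl
        exact (List.nodup_cons.mp hnd).1 hb
      have := h b (List.mem_cons_of_mem _ hb)
      rw [hx'] at this
      exact letter_le_cons hsymm hirr (fun hh => hba hh.symm) this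
    obtain ⟨u, hu⟩ := ih x' (List.nodup_cons.mp hnd).2 ht
    rw [hx', hu, hw_cons]
    exact ⟨u, (mul_assoc _ _ _).symm⟩

lemma cl_le (hsymm : ∀ a b : S, I a b → I b a) (hirr : ∀ a : S, ¬ I a a)
    {γ : Cl I} {x : Heap I} (h : ∀ a ∈ γ.1, hLe (hw I [a]) x) : hLe γ.heap x := by
  rw [cl_heap_eq]
  exact list_le hsymm hirr _ x (Finset.nodup_toList _)
    (fun a ha => h a (Finset.mem_toList.mp ha))

/-- Extraction of a letter through a clique. -/
lemma letter_le_mul (hsymm : ∀ a b : S, I a b → I b a) (hirr : ∀ a : S, ¬ I a a)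
    {a : S} {γ : Cl I} {y : Heap I} (h : hLe (hw I [a]) (γ.heap * y)) :
    a ∈ γ.1 ∨ ((∀ b ∈ γ.1, I a b) ∧ hLe (hw I [a]) y) := by
  by_cases haγ : a ∈ γ.1
  · exact Or.inl haγ
  obtain ⟨v, rfl⟩ := hw_surjective y
  rw [cl_heap_eq, ← hw_append, letter_le_iff hsymm hirr] at h
  obtain ⟨p, q, hpq, hp⟩ := h
  have hne : a ∉ γ.1.toList := fun hh => haγ (Finset.mem_toList.mp hh)
  rcases List.append_eq_append_iff.mp hpq with ⟨r, hr1, hr2⟩ | ⟨r, hr1, hr2⟩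
  · -- p = γ.toList ++ r, v = r ++ a :: q
    right
    constructor
    · intro b hb
      have : b ∈ p := by rw [hr1]; exact List.mem_append_left _ (Finset.mem_toList.mpr hb)
      exact hsymm _ _ (hp b this)
    · rw [hr2, letter_le_iff hsymm hirr]
      refine ⟨r, q, rfl, ?_⟩
      intro c hc
      exact hp c (by rw [hr1]; exact List.mem_append_right _ hc)
  · -- γ.toList = p ++ r, a :: q = r ++ v
    cases r with
    | nil =>
      right
      rw [List.append_nil] at hr1
      simp only [List.nil_append] at hr2
      constructor
      · intro b hb
        have : b ∈ p := by rw [← hr1]; exact Finset.mem_toList.mpr hb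
        exact hsymm _ _ (hp b this)
      · rw [← hr2, letter_le_iff hsymm hirr]
        exact ⟨[], q, rfl, by simp⟩
    | cons r₀ r' =>
      exfalso
      have : r₀ = a := (List.head_eq_of_cons_eq hr2.symm)
      apply hne
      rw [hr1, this]
      exact List.mem_append_right _ (List.mem_cons_self)

end CliqueAux

section CFAux

variable {S : Type} [DecidableEq S] {I : S → S → Prop}

lemma ppSeq_zero (c : ℕ → Cl I) : ppSeq c 0 = 1 := rfl

lemma ppSeq_succ (c : ℕ → Cl I) (n : ℕ) : ppSeq c (n + 1) = ppSeq c n * (c n).heap := by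
  unfold ppSeq
  rw [List.range_succ, List.map_append, List.prod_append]
  simp

lemma ppSeq_le_of_le (c : ℕ → Cl I) {n m : ℕ} (h : n ≤ m) : hLe (ppSeq c n) (ppSeq c m) := by
  induction m with
  | zero => rw [Nat.le_zero.mp h]; exact hLe_refl _
  | succ m ih =>
    by_cases hnm : n ≤ m
    · rw [ppSeq_succ]
      exact hLe_trans (ih hnm) (hLe_mul_right _ _)
    · have : n = m + 1 := by omega
      rw [this]; exact hLe_refl _

lemma ppSeq_shift (c : ℕ → Cl I) (n : ℕ) :
    ppSeq c (n + 1) = (c 0).heap * ppSeq (fun i => c (i + 1)) n := by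
  induction n with
  | zero =>
    rw [ppSeq_succ, ppSeq_zero, ppSeq_zero, one_mul, mul_one]
  | succ n ih =>
    rw [ppSeq_succ, ih, ppSeq_succ, mul_assoc]

lemma ppSeq_congr {c d : ℕ → Cl I} (n : ℕ) (h : ∀ i < n, c i = d i) :
    ppSeq c n = ppSeq d n := by
  induction n with
  | zero => rfl
  | succ n ih =>
    rw [ppSeq_succ, ppSeq_succ, ih (fun i hi => h i (Nat.lt_succ_of_lt hi)),
      h n (Nat.lt_succ_self n)]

lemma move_emptyCl (γ : Cl I) : Move γ (emptyCl I) := by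
  intro b hb
  exact absurd hb (Finset.notMem_empty b)

lemma cf_spec (hCF : ∀ x : Heap I, ∃! c : ℕ → Cl I, CFprop I c x) (x : Heap I) :
    CFprop I (cf I x) x := by
  have hex : ∃ c, CFprop I c x := (hCF x).exists
  unfold cf
  rw [dif_pos hex]
  exact hex.choose_spec

lemma cf_unique (hCF : ∀ x : Heap I, ∃! c : ℕ → Cl I, CFprop I c x) {x : Heap I}
    {c : ℕ → Cl I} (h : CFprop I c x) : cf I x = c :=
  ((hCF x).unique (cf_spec hCF x) h)

lemma pp_inl (x : Heap I) (n : ℕ) : pp (Sum.inl x) n = ppSeq (cf I x) n := rfl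

lemma pp_inr (ξ : Bnd I) (n : ℕ) : pp (Sum.inr ξ) n = ppSeq ξ.1 n := rfl

lemma pp_inl_eventually (hCF : ∀ x : Heap I, ∃! c : ℕ → Cl I, CFprop I c x) (x : Heap I) :
    ∃ N, ∀ n, N ≤ n → ppSeq (cf I x) n = x := by
  obtain ⟨-, N, hN⟩ := cf_spec hCF x
  exact ⟨N, fun n hn => (hN n hn).1⟩

lemma pp_inl_le (hCF : ∀ x : Heap I, ∃! c : ℕ → Cl I, CFprop I c x) (x : Heap I) (n : ℕ) :
    hLe (ppSeq (cf I x) n) x := by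
  obtain ⟨N, hN⟩ := pp_inl_eventually hCF x
  have h1 : hLe (ppSeq (cf I x) n) (ppSeq (cf I x) (max n N)) :=
    ppSeq_le_of_le _ (le_max_left _ _)
  rwa [hN _ (le_max_right _ _)] at h1

/-- CF decomposition of a truncated admissible sequence. -/
lemma cf_trunc (hCF : ∀ x : Heap I, ∃! c : ℕ → Cl I, CFprop I c x)
    (c : ℕ → Cl I) (hM : ∀ n, Move (c n) (c (n + 1))) (m : ℕ) :
    CFprop I (fun i => if i < m then c i else emptyCl I) (ppSeq c m) := by
  constructor
  · intro n
    show Move (if n < m then c n else emptyCl I) (if n + 1 < m then c (n + 1) else emptyCl I)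
    by_cases h1 : n + 1 < m
    · rw [if_pos (Nat.lt_of_succ_lt h1), if_pos h1]
      exact hM n
    · rw [if_neg h1]
      exact move_emptyCl _
  · refine ⟨m, fun n hn => ⟨?_, if_neg (by omega)⟩⟩
    induction n with
    | zero =>
      have : m = 0 := Nat.le_zero.mp hn
      subst this
      rfl
    | succ n ih =>
      rcases Nat.lt_or_ge m (n + 1) with h' | h'
      · rw [ppSeq_succ, if_neg (by omega), emptyCl_heap, mul_one]
        exact ih (by omega)
      · have : m = n + 1 := by omega
        subst this
        exact ppSeq_congr (n + 1) (fun i hi => by simp [hi])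

lemma ppSeq_trunc_eq (c : ℕ → Cl I) (m n : ℕ) :
    ppSeq (fun i => if i < m then c i else emptyCl I) n = ppSeq c (min n m) := by
  induction n with
  | zero => rw [Nat.zero_min]; rfl
  | succ n ih =>
    rcases Nat.lt_or_ge n m with h' | h'
    · have h1 : min (n + 1) m = n + 1 := by omega
      have h2 : min n m = n := by omega
      rw [ppSeq_succ, ih, h2, h1, ppSeq_succ]
      show ppSeq c n * (if n < m then c n else emptyCl I).heap = _
      rw [if_pos h']
    · have h1 : min (n + 1) m = m := by omega
      have h2 : min n m = m := by omega
      rw [ppSeq_succ, ih, h2, h1]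
      show ppSeq c m * (if n < m then c n else emptyCl I).heap = ppSeq c m
      rw [if_neg (by omega), emptyCl_heap, mul_one]

lemma pp_inl_ppSeq (hCF : ∀ x : Heap I, ∃! c : ℕ → Cl I, CFprop I c x)
    (c : ℕ → Cl I) (hM : ∀ n, Move (c n) (c (n + 1))) (m n : ℕ) :
    ppSeq (cf I (ppSeq c m)) n = ppSeq c (min n m) := by
  rw [cf_unique hCF (cf_trunc hCF c hM m), ppSeq_trunc_eq]

/-- A letter dividing an admissible product lies in the first clique. -/
lemma mem_fst_of_letter_le (hsymm : ∀ a b : S, I a b → I b a) (hirr : ∀ a : S, ¬ I a a) :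
    ∀ (m : ℕ) (c : ℕ → Cl I), (∀ n, Move (c n) (c (n + 1))) →
      ∀ {a : S}, hLe (hw I [a]) (ppSeq c m) → a ∈ (c 0).1 := by
  intro m
  induction m with
  | zero =>
    intro c _ a h
    exfalso
    have h1 := hLe_len h
    rw [len_hw, ppSeq_zero, len_one] at h1
    simp at h1
  | succ m ih =>
    intro c hM a h
    rw [ppSeq_shift] at h
    rcases letter_le_mul hsymm hirr h with h1 | ⟨h2, h3⟩
    · exact h1
    · exfalso
      have ha1 : a ∈ (c 1).1 := ih (fun i => c (i + 1)) (fun n => hM (n + 1)) h3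
      obtain ⟨b, hb, hdep⟩ := hM 0 a ha1
      exact hdep (hsymm _ _ (h2 b hb))

/-- Characterization of the first Cartier–Foata clique. -/
lemma mem_cf_zero_iff (hCF : ∀ x : Heap I, ∃! c : ℕ → Cl I, CFprop I c x)
    (hsymm : ∀ a b : S, I a b → I b a) (hirr : ∀ a : S, ¬ I a a)
    {x : Heap I} {a : S} : a ∈ (cf I x 0).1 ↔ hLe (hw I [a]) x := by
  obtain ⟨hM, N, hN⟩ := cf_spec hCF x
  constructor
  · intro h
    have hN1 : 1 ≤ N := by
      by_contra hc
      have : N = 0 := by omega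
      subst this
      have := (hN 0 le_rfl).2
      rw [this] at h
      exact absurd h (Finset.notMem_empty a)
    have h1 : hLe (hw I [a]) (ppSeq (cf I x) 1) := by
      rw [ppSeq_succ, ppSeq_zero, one_mul]
      exact letter_le_cl hsymm hirr h
    have h2 := hLe_trans h1 (ppSeq_le_of_le _ hN1)
    rwa [(hN N le_rfl).1] at h2
  · intro h
    have hx : x = ppSeq (cf I x) N := ((hN N le_rfl).1).symm
    rw [hx] at h
    exact mem_fst_of_letter_le hsymm hirr N _ hM h

/-- Shift decomposition of the CF normal form. -/
lemma cf_succ (hCF : ∀ x : Heap I, ∃! c : ℕ → Cl I, CFprop I c x)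
    (hsymm : ∀ a b : S, I a b → I b a) (hirr : ∀ a : S, ¬ I a a) (x : Heap I) :
    ∃ x' : Heap I, x = (cf I x 0).heap * x' ∧
      (∀ n, cf I x' n = cf I x (n + 1)) ∧
      (∀ n, ppSeq (cf I x) (n + 1) = (cf I x 0).heap * ppSeq (cf I x') n) := by
  obtain ⟨hM, N, hN⟩ := cf_spec hCF x
  set c := cf I x with hc
  refine ⟨ppSeq (fun i => c (i + 1)) N, ?_, ?_, ?_⟩
  · rw [← ppSeq_shift]
    exact ((hN (N + 1) (Nat.le_succ N)).1).symm
  · have hcf : cf I (ppSeq (fun i => c (i + 1)) N) = fun i => c (i + 1) := by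
      apply cf_unique hCF
      constructor
      · intro n; exact hM (n + 1)
      · refine ⟨N, fun n hn => ⟨?_, ?_⟩⟩
        · have h1 : (c 0).heap * ppSeq (fun i => c (i + 1)) n
              = (c 0).heap * ppSeq (fun i => c (i + 1)) N := by
            rw [← ppSeq_shift, ← ppSeq_shift, (hN (n + 1) (by omega)).1,
              (hN (N + 1) (by omega)).1]
          exact heap_cancel_left hsymm hirr h1
        · exact (hN (n + 1) (by omega)).2
    intro n
    rw [hcf]
  · intro n
    have hcf : cf I (ppSeq (fun i => c (i + 1)) N) = fun i => c (i + 1) := by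
      apply cf_unique hCF
      constructor
      · intro n; exact hM (n + 1)
      · refine ⟨N, fun n hn => ⟨?_, ?_⟩⟩
        · have h1 : (c 0).heap * ppSeq (fun i => c (i + 1)) n
              = (c 0).heap * ppSeq (fun i => c (i + 1)) N := by
            rw [← ppSeq_shift, ← ppSeq_shift, (hN (n + 1) (by omega)).1,
              (hN (N + 1) (by omega)).1]
          exact heap_cancel_left hsymm hirr h1
        · exact (hN (n + 1) (by omega)).2
    rw [hcf, ← ppSeq_shift]

end CFAux

section PF1

variable {S : Type} [DecidableEq S] {I : S → S → Prop}

lemma heap_eq_of_finset_eq {γ δ : Cl I} (h : γ.1 = δ.1) : γ.heap = δ.heap := by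
  rw [cl_heap_eq, cl_heap_eq, h]

/-- Key lemma (P): the CF prefix of `γ·z` divides `γ` times the CF prefix of `z`. -/
lemma P_lemma (hCF : ∀ x : Heap I, ∃! c : ℕ → Cl I, CFprop I c x)
    (hsymm : ∀ a b : S, I a b → I b a) (hirr : ∀ a : S, ¬ I a a) :
    ∀ (n : ℕ) (γ : Cl I) (z : Heap I),
      hLe (ppSeq (cf I (γ.heap * z)) n) (γ.heap * ppSeq (cf I z) n) := by
  intro n
  induction n with
  | zero => intro γ z; rw [ppSeq_zero]; exact hLe_one _
  | succ n ih =>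
    intro γ z
    obtain ⟨w', hw1, -, hw3⟩ := cf_succ hCF hsymm hirr (γ.heap * z)
    obtain ⟨z', hz1, -, hz3⟩ := cf_succ hCF hsymm hirr z
    set δ : Cl I := cf I (γ.heap * z) 0 with hδdef
    set δz : Cl I := cf I z 0 with hδzdef
    have hsub : γ.1 ⊆ δ.1 := by
      intro a ha
      exact (mem_cf_zero_iff hCF hsymm hirr).mpr
        (hLe_trans (letter_le_cl hsymm hirr ha) ⟨z, rfl⟩)
    set ε : Cl I := subCl δ (δ.1 \ γ.1) Finset.sdiff_subset with hεdef
    have hε : ∀ a ∈ ε.1, (∀ b ∈ γ.1, I a b) ∧ hLe (hw I [a]) z := by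
      intro a ha
      have haδ := Finset.mem_sdiff.mp ha
      have h1 : hLe (hw I [a]) (γ.heap * z) := (mem_cf_zero_iff hCF hsymm hirr).mp haδ.1
      rcases letter_le_mul hsymm hirr h1 with h | h
      · exact absurd h haδ.2
      · exact h
    have hsub2 : ε.1 ⊆ δz.1 := fun a ha => (mem_cf_zero_iff hCF hsymm hirr).mpr (hε a ha).2
    have e1 : (subCl δ γ.1 hsub).heap = γ.heap := heap_eq_of_finset_eq rfl
    have hδ : δ.heap = γ.heap * ε.heap := by
      rw [cl_split_heap δ γ.1 hsub, e1]
    set ε₂ : Cl I := subCl δz (δz.1 \ ε.1) Finset.sdiff_subset with hε₂def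
    have e2 : (subCl δz ε.1 hsub2).heap = ε.heap := heap_eq_of_finset_eq rfl
    have hδz : δz.heap = ε.heap * ε₂.heap := by
      rw [cl_split_heap δz ε.1 hsub2, e2]
    have key : w' = ε₂.heap * z' := by
      apply heap_cancel_left hsymm hirr (x := γ.heap * ε.heap)
      have h1 : γ.heap * ε.heap * w' = γ.heap * z := by rw [← hδ, ← hw1]
      have h2 : γ.heap * z = γ.heap * ε.heap * (ε₂.heap * z') := by
        rw [hz1, hδz]
        simp only [mul_assoc]
      rw [h1, h2]
    rw [hw3 n, hz3 n, key, hδ, hδz]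
    rw [mul_assoc γ.heap, mul_assoc ε.heap]
    exact hLe_mul_left_mono _ (hLe_mul_left_mono _ (ih ε₂ z'))

/-- Monotonicity of CF prefixes with respect to left divisibility. -/
lemma cf_prefix_mono (hCF : ∀ x : Heap I, ∃! c : ℕ → Cl I, CFprop I c x)
    (hsymm : ∀ a b : S, I a b → I b a) (hirr : ∀ a : S, ¬ I a a) :
    ∀ (n : ℕ) {u w : Heap I}, hLe u w → hLe (ppSeq (cf I u) n) (ppSeq (cf I w) n) := by
  intro n
  induction n with
  | zero => intro u w _; exact hLe_refl _
  | succ n ih =>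
    intro u w h
    obtain ⟨u', hu1, -, hu3⟩ := cf_succ hCF hsymm hirr u
    obtain ⟨w', hw1, -, hw3⟩ := cf_succ hCF hsymm hirr w
    set γ : Cl I := cf I u 0 with hγdef
    set δ : Cl I := cf I w 0 with hδdef
    have hsub : γ.1 ⊆ δ.1 := by
      intro a ha
      have h1 : hLe (hw I [a]) u := (mem_cf_zero_iff hCF hsymm hirr).mp ha
      exact (mem_cf_zero_iff hCF hsymm hirr).mpr (hLe_trans h1 h)
    have e1 : (subCl δ γ.1 hsub).heap = γ.heap := heap_eq_of_finset_eq rfl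
    set ε : Cl I := subCl δ (δ.1 \ γ.1) Finset.sdiff_subset with hεdef
    have hδ : δ.heap = γ.heap * ε.heap := by
      rw [cl_split_heap δ γ.1 hsub, e1]
    obtain ⟨s, hs⟩ := h
    have hkey : hLe u' (ε.heap * w') := by
      refine ⟨s, heap_cancel_left hsymm hirr (x := γ.heap) ?_⟩
      have h1 : γ.heap * (ε.heap * w') = w := by rw [← mul_assoc, ← hδ, ← hw1]
      have h2 : w = γ.heap * (u' * s) := by rw [hs, hu1, mul_assoc]
      rw [h1, h2]
    have hP := P_lemma hCF hsymm hirr n ε w'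
    have hih := ih hkey
    have h3 : hLe (ppSeq (cf I u') n) (ε.heap * ppSeq (cf I w') n) :=
      hLe_trans hih hP
    rw [hu3 n, hw3 n, hδ, mul_assoc]
    exact hLe_mul_left_mono _ h3

/-- Transport of `mLe` along left divisibility. -/
lemma mLe_inl_mono (hCF : ∀ x : Heap I, ∃! c : ℕ → Cl I, CFprop I c x)
    (hsymm : ∀ a b : S, I a b → I b a) (hirr : ∀ a : S, ¬ I a a)
    {u v : Heap I} (h : hLe u v) {η : MB I} (h2 : mLe (Sum.inl v) η) :
    mLe (Sum.inl u) η := fun n =>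
  hLe_trans (cf_prefix_mono hCF hsymm hirr n h) (h2 n)

lemma mLe_refl (ζ : MB I) : mLe ζ ζ := fun _ => hLe_refl _

lemma star_fwd (hCF : ∀ x : Heap I, ∃! c : ℕ → Cl I, CFprop I c x)
    {u : Heap I} {ζ : Bnd I} (h : mLe (Sum.inl u) (Sum.inr ζ)) :
    ∃ m, hLe u (ppSeq ζ.1 m) := by
  obtain ⟨N, hN⟩ := pp_inl_eventually hCF u
  have := h N
  rw [pp_inl, hN N le_rfl] at this
  exact ⟨N, this⟩

lemma star_back (hCF : ∀ x : Heap I, ∃! c : ℕ → Cl I, CFprop I c x)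
    (hsymm : ∀ a b : S, I a b → I b a) (hirr : ∀ a : S, ¬ I a a)
    {u : Heap I} {ζ : Bnd I} {m : ℕ} (h : hLe u (ppSeq ζ.1 m)) :
    mLe (Sum.inl u) (Sum.inr ζ) := by
  intro n
  rw [pp_inl, pp_inr]
  have h1 := cf_prefix_mono hCF hsymm hirr n h
  have h2 : ppSeq (cf I (ppSeq ζ.1 m)) n = ppSeq ζ.1 (min n m) :=
    pp_inl_ppSeq hCF ζ.1 ζ.2.2 m n
  rw [h2] at h1
  exact hLe_trans h1 (ppSeq_le_of_le _ (Nat.min_le_left _ _))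

end PF1

section LimitAux

variable {S : Type} [DecidableEq S] {I : S → S → Prop}

lemma occ_hw (a : S) (l : List S) : occ a (hw I l) = l.count a := by
  unfold occ
  rw [addExt_hw]
  induction l with
  | nil => rfl
  | cons b t ih =>
    rw [List.map_cons, List.sum_cons, ih, List.count_cons]
    by_cases h : b = a
    · subst h; simp [Nat.add_comm]
    · have h2 : ¬ a = b := fun hh => h hh.symm
      simp [h, h2]

lemma mem_cl_iff_occ {γ : Cl I} {a : S} : a ∈ γ.1 ↔ 0 < occ a γ.heap := by
  rw [cl_heap_eq, occ_hw]
  rw [List.count_pos_iff]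
  exact ⟨fun h => Finset.mem_toList.mpr h, fun h => Finset.mem_toList.mp h⟩

lemma cl_heap_inj {γ δ : Cl I} (h : γ.heap = δ.heap) : γ = δ := by
  have : γ.1 = δ.1 := by
    ext a
    rw [mem_cl_iff_occ, mem_cl_iff_occ, h]
  exact Subtype.ext this

lemma len_ppSeq_le [Fintype S] (c : ℕ → Cl I) (n : ℕ) :
    len (ppSeq c n) ≤ n * Fintype.card S := by
  induction n with
  | zero => rw [ppSeq_zero, len_one]; omega
  | succ n ih =>
    rw [ppSeq_succ, len_mul, len_cl]
    have := Finset.card_le_univ (c n).1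
    have h2 : (n + 1) * Fintype.card S = n * Fintype.card S + Fintype.card S := by ring
    omega

lemma len_ppSeq_ge (ξ : Bnd I) (n : ℕ) : n ≤ len (ppSeq ξ.1 n) := by
  induction n with
  | zero => omega
  | succ n ih =>
    rw [ppSeq_succ, len_mul, len_cl]
    have := Finset.Nonempty.card_pos (ξ.2.1 n)
    omega

lemma hLe_chain {v : ℕ → Heap I} (h : ∀ n, hLe (v n) (v (n + 1))) {m n : ℕ} (hmn : m ≤ n) :
    hLe (v m) (v n) := by
  induction n with
  | zero => rw [Nat.le_zero.mp hmn]; exact hLe_refl _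
  | succ n ih =>
    by_cases h' : m ≤ n
    · exact hLe_trans (ih h') (h n)
    · have : m = n + 1 := by omega
      rw [this]; exact hLe_refl _

lemma stabilize {v : ℕ → Heap I} (hmono : ∀ n, hLe (v n) (v (n + 1))) (B : ℕ)
    (hB : ∀ n, len (v n) ≤ B) : ∃ N, ∀ n, N ≤ n → v n = v N := by
  classical
  have hspec : ∃ k, len (v k) = Nat.findGreatest (fun m => ∃ k, len (v k) = m) B :=
    Nat.findGreatest_spec (P := fun m => ∃ k, len (v k) = m) (hB 0) ⟨0, rfl⟩
  obtain ⟨N, hN⟩ := hspec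
  refine ⟨N, fun n hn => ?_⟩
  have h1 : hLe (v N) (v n) := hLe_chain hmono hn
  have h2 : len (v n) ≤ Nat.findGreatest (fun m => ∃ k, len (v k) = m) B :=
    Nat.le_findGreatest (hB n) ⟨n, rfl⟩
  rw [← hN] at h2
  exact (eq_of_hLe_len h1 h2).symm

lemma concB_isConc (hconc : ∀ (x : Heap I) (ξ : Bnd I), ∃ ζ : Bnd I, IsConc x ξ (Sum.inr ζ))
    (x : Heap I) (ζ : Bnd I) : IsConc x ζ (Sum.inr (concB x ζ)) := by
  unfold concB
  rw [dif_pos (hconc x ζ)]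
  exact (hconc x ζ).choose_spec

lemma subB_spec {x : Heap I} {ξ : Bnd I} (h : ∃ ζ : Bnd I, concB x ζ = ξ) :
    concB x (subB ξ x) = ξ := by
  unfold subB
  rw [dif_pos h]
  exact h.choose_spec

/-- Compactness: finite prefixes of a concatenation `x·ζ` are dominated by finite stages. -/
lemma concB_pp_le [Fintype S] (hCF : ∀ x : Heap I, ∃! c : ℕ → Cl I, CFprop I c x)
    (hsymm : ∀ a b : S, I a b → I b a) (hirr : ∀ a : S, ¬ I a a)
    (hconc : ∀ (x : Heap I) (ξ : Bnd I), ∃ ζ : Bnd I, IsConc x ξ (Sum.inr ζ))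
    (x : Heap I) (ζ : Bnd I) (j : ℕ) :
    ∃ m, hLe (ppSeq (concB x ζ).1 j) (x * ppSeq ζ.1 m) := by
  classical
  set u : ℕ → Heap I := fun n => x * ppSeq ζ.1 n with hu
  have umono : ∀ n, hLe (u n) (u (n + 1)) := by
    intro n
    exact hLe_mul_left_mono x (ppSeq_le_of_le _ (Nat.le_succ n))
  have uchain : ∀ {m n : ℕ}, m ≤ n → hLe (u m) (u n) := fun h => hLe_chain umono h
  -- prefix stabilization
  have hstabex : ∀ k : ℕ, ∃ N, ∀ n, N ≤ n →
      ppSeq (cf I (u n)) k = ppSeq (cf I (u N)) k := by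
    intro k
    apply stabilize (v := fun n => ppSeq (cf I (u n)) k)
      (B := k * Fintype.card S)
    · intro n
      exact cf_prefix_mono hCF hsymm hirr k (umono n)
    · intro n
      exact len_ppSeq_le _ k
  choose N hN using hstabex
  -- clique stabilization
  have hclique : ∀ k n m, N k ≤ n → N (k + 1) ≤ n → N k ≤ m → N (k + 1) ≤ m →
      cf I (u n) k = cf I (u m) k := by
    intro k n m h1 h2 h3 h4
    apply cl_heap_inj
    apply heap_cancel_left hsymm hirr (x := ppSeq (cf I (u n)) k)
    have e1 : ppSeq (cf I (u n)) k = ppSeq (cf I (u m)) k := by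
      rw [hN k n h1, hN k m h3]
    have e2 : ppSeq (cf I (u n)) (k + 1) = ppSeq (cf I (u m)) (k + 1) := by
      rw [hN (k + 1) n h2, hN (k + 1) m h4]
    rw [← ppSeq_succ, e2, ppSeq_succ, e1]
  -- a uniform bound
  set B : ℕ → ℕ := fun j => ∑ i ∈ Finset.range (j + 1), N i with hB
  have hBle : ∀ i j, i ≤ j → N i ≤ B j := by
    intro i j hij
    exact Finset.single_le_sum (f := N) (fun _ _ => Nat.zero_le _)
      (Finset.mem_range.mpr (by omega))
  -- the limit sequence
  set γs : ℕ → Cl I := fun k => cf I (u (B (k + 1))) k with hγs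
  have hγeq : ∀ k n, N k ≤ n → N (k + 1) ≤ n → γs k = cf I (u n) k := by
    intro k n h1 h2
    exact hclique k (B (k + 1)) n (hBle k (k + 1) (by omega))
      (hBle (k + 1) (k + 1) le_rfl) h1 h2
  have hppstar : ∀ jj n, (∀ i, i ≤ jj → N i ≤ n) → ppSeq γs jj = ppSeq (cf I (u n)) jj := by
    intro jj
    induction jj with
    | zero => intro n _; rfl
    | succ m ih =>
      intro n hn
      rw [ppSeq_succ, ppSeq_succ, ih n (fun i hi => hn i (by omega)),
        hγeq m n (hn m (by omega)) (hn (m + 1) le_rfl)]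
  -- nonemptiness of the limit cliques
  have hne : ∀ k, (γs k).1.Nonempty := by
    intro k
    by_contra hemp
    rw [Finset.not_nonempty_iff_eq_empty] at hemp
    -- choose a very large n
    set n := max (B (k + 1)) (len x + (k + 1) * Fintype.card S + 1) with hn
    have h1 : γs k = cf I (u n) k :=
      hγeq k n (le_trans (hBle k (k + 1) (by omega)) (le_max_left _ _))
        (le_trans (hBle (k + 1) (k + 1) le_rfl) (le_max_left _ _))
    -- all later cliques of u n are empty
    obtain ⟨hM, Nn, hNn⟩ := cf_spec hCF (u n)
    have hprop : ∀ i, k ≤ i → (cf I (u n) i).1 = ∅ := by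
      intro i hi
      induction i with
      | zero =>
        have hk : k = 0 := by omega
        rw [← hk, ← h1]
        exact hemp
      | succ m ihm =>
        by_cases hkm : k ≤ m
        · have hm := ihm hkm
          apply Finset.eq_empty_of_forall_notMem
          intro b hb
          obtain ⟨a, ha, -⟩ := hM m b hb
          rw [hm] at ha
          exact Finset.notMem_empty a ha
        · have hk : k = m + 1 := by omega
          rw [← hk, ← h1]
          exact hemp
    -- u n = its k-prefix, contradicting its length
    have hupp : ∀ i, k ≤ i → ppSeq (cf I (u n)) i = ppSeq (cf I (u n)) k := by
      intro i hi
      induction i with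
      | zero =>
        have hk : k = 0 := by omega
        rw [hk]
      | succ m ihm =>
        by_cases hkm : k ≤ m
        · rw [ppSeq_succ, cl_heap_eq_one (hprop m hkm), mul_one]
          exact ihm hkm
        · have hk : k = m + 1 := by omega
          rw [hk]
    have hun : u n = ppSeq (cf I (u n)) k := by
      rw [← hupp (max Nn k) (le_max_right _ _), (hNn (max Nn k) (le_max_left _ _)).1]
    have hlen1 : len (u n) ≤ k * Fintype.card S := by
      rw [hun]; exact len_ppSeq_le _ k
    have hlen2 : n ≤ len (u n) := by
      rw [hu]
      show n ≤ len (x * ppSeq ζ.1 n)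
      rw [len_mul]
      have := len_ppSeq_ge ζ n
      omega
    have : len x + (k + 1) * Fintype.card S + 1 ≤ n := le_max_right _ _
    have hcard : k * Fintype.card S ≤ (k + 1) * Fintype.card S := by
      have : Fintype.card S ≥ 0 := Nat.zero_le _
      nlinarith
    omega
  have hmove : ∀ k, Move (γs k) (γs (k + 1)) := by
    intro k
    set n := B (k + 2) with hn
    have h1 : γs k = cf I (u n) k :=
      hγeq k n (hBle k (k + 2) (by omega)) (hBle (k + 1) (k + 2) (by omega))
    have h2 : γs (k + 1) = cf I (u n) (k + 1) :=
      hγeq (k + 1) n (hBle (k + 1) (k + 2) (by omega)) (hBle (k + 2) (k + 2) le_rfl)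
    rw [h1, h2]
    exact (cf_spec hCF (u n)).1 k
  set ξstar : Bnd I := ⟨γs, hne, hmove⟩ with hξstar
  -- ξstar is an upper bound of the chain
  have hub : ∀ n, mLe (Sum.inl (u n)) (Sum.inr ξstar) := by
    intro n jj
    rw [pp_inl, pp_inr]
    set n' := max n (B jj) with hn'
    have h1 : hLe (ppSeq (cf I (u n)) jj) (ppSeq (cf I (u n')) jj) :=
      cf_prefix_mono hCF hsymm hirr jj (uchain (le_max_left _ _))
    have h2 : ppSeq ξstar.1 jj = ppSeq (cf I (u n')) jj := by
      apply hppstar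
      intro i hi
      exact le_trans (hBle i jj hi) (le_max_right _ _)
    rw [h2]
    exact h1
  -- minimality
  have hmin : ∀ η : MB I, (∀ n, mLe (Sum.inl (u n)) η) → mLe (Sum.inr ξstar) η := by
    intro η hη jj
    have h2 : ppSeq ξstar.1 jj = ppSeq (cf I (u (B jj))) jj := by
      apply hppstar
      intro i hi
      exact hBle i jj hi
    have h3 := hη (B jj) jj
    rw [pp_inl] at h3
    rw [pp_inr, h2]
    exact h3
  have hstarconc : IsConc x ζ (Sum.inr ξstar) := ⟨hub, hmin⟩
  -- conclude
  have hcc := concB_isConc hconc x ζ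
  have hle := hcc.2 (Sum.inr ξstar) hub
  have h4 := hle j
  rw [pp_inr, pp_inr] at h4
  have h5 : ppSeq ξstar.1 j = ppSeq (cf I (u (B j))) j :=
    hppstar j (B j) (fun i hi => hBle i j hi)
  rw [h5] at h4
  exact ⟨B j, hLe_trans h4 (pp_inl_le hCF _ j)⟩

end LimitAux

theorem iterated_AST_isAST
    {S : Type} [Fintype S] [DecidableEq S] (I : S → S → Prop)
    (hsymm : ∀ a b : S, I a b → I b a)
    (hirr : ∀ a : S, ¬ I a a)
    (hconn : ∀ a b : S, Relation.ReflTransGen (fun x y : S => x ≠ y ∧ ¬ I x y) a b)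
    (hcard : 1 < Fintype.card S)
    (hCF : ∀ x : Heap I, ∃! c : ℕ → Cl I, CFprop I c x)
    (hconc : ∀ (x : Heap I) (ξ : Bnd I), ∃ ζ : Bnd I, IsConc x ξ (Sum.inr ζ))
    (hconcInj : ∀ (x : Heap I) (ζ ζ' : Bnd I), concB x ζ = concB x ζ' → ζ = ζ')
    (hsubEx : ∀ (x : Heap I) (ξ : Bnd I), ξ ∈ cyl x → ∃ ζ : Bnd I, concB x ζ = ξ)
    (V : Bnd I → MB I) (hV : IsAST V) :
    ∀ n : ℕ, IsAST (iter V n) := by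
  intro n
  induction n with
  | zero =>
    constructor
    · intro ξ m
      show hLe (pp (Sum.inl (1 : Heap I)) m) (pp (Sum.inr ξ) m)
      rw [pp_inl, pp_inr]
      exact hLe_trans (pp_inl_le hCF 1 m) (hLe_one _)
    · intro ξ ξ' x _ _
      rfl
  | succ n ih =>
    obtain ⟨ih1, ih2⟩ := ih
    constructor
    · intro ξ
      cases hit : iter V n ξ with
      | inr ζ =>
        have heq : iter V (n + 1) ξ = Sum.inr ξ := by simp [iter, hit]; rfl
        rw [heq]
        exact mLe_refl _
      | inl x =>
        have hx : mLe (Sum.inl x) (Sum.inr ξ) := hit ▸ ih1 ξ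
        have hex : ∃ ζ : Bnd I, concB x ζ = ξ := hsubEx x ξ hx
        have hsub : concB x (subB ξ x) = ξ := subB_spec hex
        have hIC : IsConc x (subB ξ x) (Sum.inr ξ) := by
          have h0 := concB_isConc hconc x (subB ξ x)
          rwa [hsub] at h0
        cases hV1 : V (subB ξ x) with
        | inl y =>
          have heq : iter V (n + 1) ξ = Sum.inl (x * y) := by simp [iter, hit, hV1]; rfl
          rw [heq]
          have h1 : mLe (Sum.inl y) (Sum.inr (subB ξ x)) := hV1 ▸ hV.1 (subB ξ x)
          obtain ⟨m, hm⟩ := star_fwd hCF h1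
          have h2 : hLe (x * y) (x * ppSeq (subB ξ x).1 m) := hLe_mul_left_mono x hm
          exact mLe_inl_mono hCF hsymm hirr h2 (hIC.1 m)
        | inr ζ =>
          have heq : iter V (n + 1) ξ = Sum.inr (concB x ζ) := by simp [iter, hit, hV1]; rfl
          rw [heq]
          have hICζ := concB_isConc hconc x ζ
          apply hICζ.2 (Sum.inr ξ)
          intro m
          have h1 : mLe (Sum.inr ζ) (Sum.inr (subB ξ x)) := hV1 ▸ hV.1 (subB ξ x)
          have h2 : hLe (ppSeq ζ.1 m) (ppSeq (subB ξ x).1 m) := by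
            have := h1 m
            rwa [pp_inr, pp_inr] at this
          have h3 : hLe (x * ppSeq ζ.1 m) (x * ppSeq (subB ξ x).1 m) := hLe_mul_left_mono x h2
          exact mLe_inl_mono hCF hsymm hirr h3 (hIC.1 m)
    · intro ξ ξ' w hw hle
      cases hit : iter V n ξ with
      | inr ζ =>
        exfalso
        rw [show iter V (n + 1) ξ = Sum.inr ξ by simp [iter, hit]; rfl] at hw
        cases hw
      | inl x =>
        cases hV1 : V (subB ξ x) with
        | inr ζ =>
          exfalso
          rw [show iter V (n + 1) ξ = Sum.inr (concB x ζ) by simp [iter, hit, hV1]; rfl] at hw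
          cases hw
        | inl y =>
          have hxy : w = x * y := by
            rw [show iter V (n + 1) ξ = Sum.inl (x * y) by simp [iter, hit, hV1]; rfl] at hw
            exact (Sum.inl.injEq _ _ ▸ hw).symm
          have hxw : hLe x w := hxy ▸ hLe_mul_right x y
          have hx' : mLe (Sum.inl x) (Sum.inr ξ') := mLe_inl_mono hCF hsymm hirr hxw hle
          have hiter' : iter V n ξ' = Sum.inl x := by
            rw [ih2 ξ ξ' x hit hx', hit]
          have hex' : ∃ ζ : Bnd I, concB x ζ = ξ' := hsubEx x ξ' hx'
          have hsub' : concB x (subB ξ' x) = ξ' := subB_spec hex'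
          have hxyle : mLe (Sum.inl (x * y)) (Sum.inr ξ') := hxy ▸ hle
          obtain ⟨j, hj⟩ := star_fwd hCF hxyle
          obtain ⟨m, hm⟩ := concB_pp_le hCF hsymm hirr hconc x (subB ξ' x) j
          rw [hsub'] at hm
          have h4 : hLe (x * y) (x * ppSeq (subB ξ' x).1 m) := hLe_trans hj hm
          have h5 : hLe y (ppSeq (subB ξ' x).1 m) := hLe_cancel_left hsymm hirr h4
          have h6 : mLe (Sum.inl y) (Sum.inr (subB ξ' x)) := star_back hCF hsymm hirr h5
          have h7 : V (subB ξ' x) = Sum.inl y := by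
            rw [hV.2 (subB ξ x) (subB ξ' x) y hV1 h6, hV1]
          show iter V (n + 1) ξ' = iter V (n + 1) ξ
          rw [show iter V (n + 1) ξ' = Sum.inl (x * y) by simp [iter, hiter', h7]; rfl,
            show iter V (n + 1) ξ = Sum.inl (x * y) by simp [iter, hit, hV1]; rfl]

end HeapPaper
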